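/- Let f : X → Y be a perfect (continuous, closed, with compact fibers) surjective map of Hausdorff topological spaces, and suppose w(Y) ≤ |Y|. Then w(X) ≤ |X|. -/

import Mathlib

open TopologicalSpace Cardinal

/-- The weight of a topological space: the minimal cardinality of a basis. -/
noncomputable def weight (X : Type*) [TopologicalSpace X] : Cardinal :=
  ⨅ B : {B : Set (Set X) // IsTopologicalBasis B}, Cardinal.mk B.1

lemma weight_le_basis {X : Type*} [TopologicalSpace X] {B : Set (Set X)}
    (hB : IsTopologicalBasis B) : weight X ≤ Cardinal.mk B :=
  ciInf_le' _ (⟨B, hB⟩ : {B : Set (Set X) // IsTopologicalBasis B})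

lemma exists_basis_weight (X : Type*) [TopologicalSpace X] :
    ∃ B : Set (Set X), IsTopologicalBasis B ∧ Cardinal.mk B = weight X := by
  have : Nonempty {B : Set (Set X) // IsTopologicalBasis B} :=
    ⟨⟨_, isTopologicalBasis_opens⟩⟩
  obtain ⟨B, hB⟩ := ciInf_mem (fun B : {B : Set (Set X) // IsTopologicalBasis B} =>
    Cardinal.mk B.1)
  exact ⟨B.1, B.2, hB⟩

lemma key_lemma {X Z : Type u} {Y : Type v} [TopologicalSpace X] [TopologicalSpace Y]
    [TopologicalSpace Z] [T2Space Z] (f : X → Y) (hf : IsProperMap f) (h : X → Z)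
    (hh : Continuous h) (hinj : Function.Injective h) {BY : Set (Set Y)}
    (hBY : IsTopologicalBasis BY) {BZ : Set (Set Z)} (hBZ : IsTopologicalBasis BZ) :
    Cardinal.lift.{v} (weight X) ≤
      Cardinal.lift.{u} (Cardinal.mk BY) * Cardinal.lift.{v} (Cardinal.mk BZ) := by
  set g : X → Y × Z := fun x => (f x, h x) with hg
  have hd : Topology.IsClosedEmbedding (fun x : X => (x, h x)) := by
    refine ⟨isEmbedding_graph hh, ?_⟩
    have hr : Set.range (fun x : X => (x, h x)) = {p : X × Z | h p.1 = p.2} := by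
      ext p
      constructor
      · rintro ⟨x, rfl⟩; rfl
      · intro hp; exact ⟨p.1, Prod.ext rfl hp⟩
    rw [hr]
    exact isClosed_eq (hh.comp continuous_fst) continuous_snd
  have hgp : IsProperMap g := (hf.prodMap isProperMap_id).comp hd.isProperMap
  have hgi : Function.Injective g := fun a b hab => hinj (congrArg Prod.snd hab)
  have hge : Topology.IsClosedEmbedding g :=
    Topology.IsClosedEmbedding.of_continuous_injective_isClosedMap
      hgp.continuous hgi hgp.isClosedMap
  set T : Set (Set (Y × Z)) := Set.image2 (· ×ˢ ·) BY BZ with hT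
  have hbasis : IsTopologicalBasis ((Set.preimage g) '' T) :=
    (hBY.prod hBZ).isInducing hge.toIsEmbedding.toIsInducing
  have h1 : weight X ≤ Cardinal.mk ((Set.preimage g) '' T) := weight_le_basis hbasis
  have h2 : Cardinal.lift.{max u v} (Cardinal.mk ((Set.preimage g) '' T)) ≤
      Cardinal.lift.{u} (Cardinal.mk T) := Cardinal.mk_image_le_lift
  have h3 : Cardinal.mk T ≤ Cardinal.mk (BY × BZ) := by
    refine Cardinal.mk_le_of_surjective (f := fun p : BY × BZ =>
      (⟨(p.1 : Set Y) ×ˢ (p.2 : Set Z), Set.mem_image2_of_mem p.1.2 p.2.2⟩ : T)) ?_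
    rintro ⟨t, ht⟩
    obtain ⟨a, ha, b, hb, rfl⟩ := ht
    exact ⟨(⟨a, ha⟩, ⟨b, hb⟩), rfl⟩
  have h4 : Cardinal.mk (BY × BZ) =
      Cardinal.lift.{u} (Cardinal.mk BY) * Cardinal.lift.{v} (Cardinal.mk BZ) :=
    Cardinal.mk_prod _ _
  calc Cardinal.lift.{v} (weight X)
      ≤ Cardinal.lift.{v} (Cardinal.mk ((Set.preimage g) '' T)) := Cardinal.lift_le.mpr h1
    _ = Cardinal.lift.{max u v} (Cardinal.mk ((Set.preimage g) '' T)) :=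
        congrFun Cardinal.lift_umax.symm _
    _ ≤ Cardinal.lift.{u} (Cardinal.mk T) := h2
    _ = Cardinal.mk T := Cardinal.lift_id' _
    _ ≤ Cardinal.mk (BY × BZ) := h3
    _ = Cardinal.lift.{u} (Cardinal.mk BY) * Cardinal.lift.{v} (Cardinal.mk BZ) := h4

theorem weight_le_mk_of_perfect_preimage {X Y : Type*} [TopologicalSpace X]
    [TopologicalSpace Y] [T2Space X] [T2Space Y] (f : X → Y)
    (hcont : Continuous f) (hclosed : IsClosedMap f)
    (hfib : ∀ y : Y, IsCompact (f ⁻¹' {y})) (hsurj : Function.Surjective f)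
    (hY : weight Y ≤ Cardinal.mk Y) : weight X ≤ Cardinal.mk X := by
  classical
  have hprop : IsProperMap f :=
    isProperMap_iff_isClosedMap_and_compact_fibers.mpr ⟨hcont, hclosed, hfib⟩
  have hYX : Cardinal.lift.{u_1} (Cardinal.mk Y) ≤ Cardinal.lift.{u_2} (Cardinal.mk X) :=
    Cardinal.lift_mk_le'.mpr ⟨Function.Embedding.ofSurjective f hsurj⟩
  cases finite_or_infinite X with
  | inl hfin =>
    haveI := hfin
    have hb := isTopologicalBasis_singletons X
    refine (weight_le_basis hb).trans ?_
    have he : {s : Set X | ∃ x, s = {x}} = Set.range (fun x : X => ({x} : Set X)) := by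
      ext s
      exact ⟨fun ⟨x, hx⟩ => ⟨x, hx.symm⟩, fun ⟨x, hx⟩ => ⟨x, hx.symm⟩⟩
    rw [he]
    exact Cardinal.mk_range_le
  | inr hinf =>
    haveI := hinf
    obtain ⟨BY, hBY, hBYcard⟩ := exists_basis_weight Y
    have sepdata : ∀ p : X × X, ∃ UV : Set X × Set X, IsOpen UV.1 ∧ IsOpen UV.2 ∧
        (p.1 ≠ p.2 → p.1 ∈ UV.1 ∧ p.2 ∈ UV.2 ∧ Disjoint UV.1 UV.2) := by
      intro p
      by_cases hp : p.1 ≠ p.2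
      · obtain ⟨u, v, hu, hv, hxu, hyv, huv⟩ := t2_separation hp
        exact ⟨(u, v), hu, hv, fun _ => ⟨hxu, hyv, huv⟩⟩
      · exact ⟨(Set.univ, Set.univ), isOpen_univ, isOpen_univ, fun hc => absurd hc hp⟩
    choose UV hU hV hsep using sepdata
    set S : Set (Set X) :=
      Set.range (fun p => (UV p).1) ∪ Set.range (fun p => (UV p).2) with hS
    have ht2 : @T2Space X (generateFrom S) := by
      refine @T2Space.mk X (generateFrom S) fun x y hxy => ?_
      refine ⟨(UV (x, y)).1, (UV (x, y)).2, ?_, ?_, (hsep (x, y) hxy).1,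
        (hsep (x, y) hxy).2.1, (hsep (x, y) hxy).2.2⟩
      · exact TopologicalSpace.isOpen_generateFrom_of_mem
          (Set.mem_union_left _ (Set.mem_range_self _))
      · exact TopologicalSpace.isOpen_generateFrom_of_mem
          (Set.mem_union_right _ (Set.mem_range_self _))
    have hSopen : ∀ s ∈ S, IsOpen s := by
      rintro s (⟨p, rfl⟩ | ⟨p, rfl⟩)
      · exact hU p
      · exact hV p
    have hcont' : @Continuous X X _ (generateFrom S) id :=
      continuous_id_iff_le.mpr (le_generateFrom hSopen)
    have hBZ : @IsTopologicalBasis X (generateFrom S)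
        ((fun f : Set (Set X) => ⋂₀ f) '' {f : Set (Set X) | f.Finite ∧ f ⊆ S}) :=
      @isTopologicalBasis_of_subbasis X (generateFrom S) S rfl
    have hkey := @key_lemma X X Y _ _ (generateFrom S) ht2 f hprop id hcont'
      Function.injective_id BY hBY _ hBZ
    -- cardinality bounds
    have hXX : Cardinal.mk (X × X) = Cardinal.mk X := by
      simp only [Cardinal.mk_prod, Cardinal.lift_id]
      exact Cardinal.mul_eq_self (Cardinal.aleph0_le_mk X)
    have hScard : Cardinal.mk S ≤ Cardinal.mk X := by
      calc Cardinal.mk S ≤ Cardinal.mk (Set.range (fun p => (UV p).1)) +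
            Cardinal.mk (Set.range (fun p => (UV p).2)) := Cardinal.mk_union_le _ _
        _ ≤ Cardinal.mk (X × X) + Cardinal.mk (X × X) :=
            add_le_add Cardinal.mk_range_le Cardinal.mk_range_le
        _ = Cardinal.mk X + Cardinal.mk X := by rw [hXX]
        _ = Cardinal.mk X := Cardinal.add_eq_self (Cardinal.aleph0_le_mk X)
    have hFinset : Cardinal.mk (Finset S) ≤ Cardinal.mk X := by
      cases finite_or_infinite S with
      | inl h =>
        haveI := h
        haveI := Fintype.ofFinite (↥S)
        exact le_trans (le_of_lt (Cardinal.lt_aleph0_of_finite _)) (Cardinal.aleph0_le_mk X)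
      | inr h =>
        haveI := h
        rw [Cardinal.mk_finset_of_infinite]
        exact hScard
    have hsub : Cardinal.mk {f : Set (Set X) // f.Finite ∧ f ⊆ S} ≤
        Cardinal.mk (Finset S) := by
      refine Cardinal.mk_le_of_surjective (f := fun F : Finset S =>
        (⟨Subtype.val '' (↑F : Set S), (F.finite_toSet.image _), by
          rintro s ⟨x, _, rfl⟩; exact x.2⟩ : {f : Set (Set X) // f.Finite ∧ f ⊆ S})) ?_
      rintro ⟨f, hfin, hfS⟩
      refine ⟨(hfin.preimage (Subtype.val_injective.injOn)).toFinset, ?_⟩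
      apply Subtype.ext
      simp only [Set.Finite.coe_toFinset]
      rw [Set.image_preimage_eq_inter_range, Subtype.range_val,
        Set.inter_eq_self_of_subset_left hfS]
    have hBZcard : Cardinal.mk ((fun f : Set (Set X) => ⋂₀ f) '' {f : Set (Set X) | f.Finite ∧ f ⊆ S}) ≤
        Cardinal.mk X := by
      refine Cardinal.mk_image_le.trans ?_
      calc Cardinal.mk {f : Set (Set X) | f.Finite ∧ f ⊆ S}
          ≤ Cardinal.mk (Finset S) := hsub
        _ ≤ Cardinal.mk X := hFinset
    have hfinal : Cardinal.lift.{u_2} (weight X) ≤ Cardinal.lift.{u_2} (Cardinal.mk X) := by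
      calc Cardinal.lift.{u_2} (weight X)
          ≤ Cardinal.lift.{u_1} (Cardinal.mk BY) * Cardinal.lift.{u_2}
              (Cardinal.mk ((fun f : Set (Set X) => ⋂₀ f) '' {f : Set (Set X) | f.Finite ∧ f ⊆ S})) := hkey
        _ ≤ Cardinal.lift.{u_2} (Cardinal.mk X) * Cardinal.lift.{u_2} (Cardinal.mk X) := by
            refine mul_le_mul' ?_ (Cardinal.lift_le.mpr hBZcard)
            refine le_trans ?_ hYX
            rw [hBYcard]
            exact Cardinal.lift_le.mpr hY
        _ = Cardinal.lift.{u_2} (Cardinal.mk X * Cardinal.mk X) := (Cardinal.lift_mul _ _).symm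
        _ = Cardinal.lift.{u_2} (Cardinal.mk X) := by
            rw [Cardinal.mul_eq_self (Cardinal.aleph0_le_mk X)]
    exact Cardinal.lift_le.mp hfinal
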